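/- (Function approximation.) For every C₀ > 0 there exists a constant C > 0, depending only on d, σ, sup_{R∈[0,1]}Ŵ(R) and C₀, with the following property. Let d ∈ {1,2,3}, let Ω = [0,l]^d with l > 0, let 0 < h ≤ 1, and let W be a radial smoothing kernel. Let x_i ∈ Ω, let (x_j)_{j∈J} be a finite family of points of Ω, and let (v_j)_{j∈J} be nonnegative weights such that |∑_{j∈J} v_j W(x_i − x_j) − 1| ≤ C₀·h² and, for every unit multi-index β, |∑_{j∈J} v_j (x_j − x_i)^β W(x_i − x_j)| ≤ C₀·h². Then for every f ∈ C²(Ω), |∑_{j∈J} v_j f(x_j) W(x_i − x_j) − f(x_i)| ≤ C·h²·‖f‖_{C²(Ω)}. -/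

import Mathlib

open scoped BigOperators RealInnerProductSpace
open Finset MeasureTheory

noncomputable section

/-- `ℝ^d` as Euclidean space. -/
abbrev Ed (d : ℕ) : Type := EuclideanSpace ℝ (Fin d)

/-- Value of the radial smoothing kernel `W(x) = (σ/h^d)·Ŵ(‖x‖/h)`,
with profile `P = Ŵ`. -/
def Wval (d : ℕ) (σ h : ℝ) (P : ℝ → ℝ) (x : Ed d) : ℝ :=
  (σ / h ^ d) * P (‖x‖ / h)

/-- Gradient of the radial smoothing kernel:
`∇W(x) = (σ/h^{d+1})·Ŵ'(‖x‖/h)·x/‖x‖` for `x ≠ 0`. -/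
def gradW (d : ℕ) (σ h : ℝ) (P : ℝ → ℝ) (x : Ed d) : Ed d :=
  ((σ / h ^ (d + 1)) * deriv P (‖x‖ / h) / ‖x‖) • x

/-- Multi-index power `v^α = v_1^{α_1}⋯v_d^{α_d}`. -/
def mpow {d : ℕ} (v : Ed d) (α : Fin d → ℕ) : ℝ := ∏ k, (v k) ^ (α k)

/-- Total degree `|α| = α_1 + ⋯ + α_d` of a multi-index. -/
def deg {d : ℕ} (α : Fin d → ℕ) : ℕ := ∑ k, α k

/-- Partial derivative along the `k`-th coordinate. -/
def pd {d : ℕ} (k : Fin d) (f : Ed d → ℝ) : Ed d → ℝ :=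
  fun x => fderiv ℝ f x (EuclideanSpace.single k 1)

/-- Mixed partial derivative `D^α f`. -/
def Dmix {d : ℕ} (α : Fin d → ℕ) (f : Ed d → ℝ) : Ed d → ℝ :=
  (List.finRange d).foldr (fun k g => (pd k)^[α k] g) f

/-- Laplacian `Δf = ∑_k ∂_k∂_k f`. -/
def lapl {d : ℕ} (f : Ed d → ℝ) : Ed d → ℝ := fun x => ∑ k, pd k (pd k f) x

/-- Variable coefficient elliptic operator `∇·(a∇f) = aΔf + ∇a·∇f`. -/
def ellip {d : ℕ} (a f : Ed d → ℝ) : Ed d → ℝ :=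
  fun x => a x * lapl f x + ∑ k, pd k a x * pd k f x

/-- The closed cube `Ω = [0,l]^d`. -/
def cube (d : ℕ) (l : ℝ) : Set (Ed d) := {x | ∀ k, x k ∈ Set.Icc 0 l}

/-- The `C^n(Ω)` norm: the max over multi-indices `α` with `|α| ≤ n` of
`sup_{x ∈ Ω} |D^α f x|`. -/
def Cnorm {d : ℕ} (n : ℕ) (f : Ed d → ℝ) (Ω : Set (Ed d)) : ℝ :=
  sSup {y : ℝ | ∃ α : Fin d → ℕ, deg α ≤ n ∧ ∃ x ∈ Ω, y = |Dmix α f x|}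

/-! ### Auxiliary lemmas -/

section Aux

variable {d : ℕ}

lemma abs_coord_le (u : Ed d) (k : Fin d) : |u k| ≤ ‖u‖ := by
  have h1 : (inner ℝ (EuclideanSpace.single k (1:ℝ)) u : ℝ) = u k := by
    simp [EuclideanSpace.inner_single_left]
  have h2 := abs_real_inner_le_norm (EuclideanSpace.single k (1:ℝ)) u
  rw [h1] at h2
  simpa [EuclideanSpace.norm_single] using h2

lemma sum_coord_single (u : Ed d) :
    ∑ k, u k • EuclideanSpace.single k (1:ℝ) = u := by
  classical
  have := (EuclideanSpace.basisFun (Fin d) ℝ).sum_repr u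
  simpa [EuclideanSpace.basisFun_apply, EuclideanSpace.basisFun_repr] using this

lemma clm_eq_sum {F : Type*} [NormedAddCommGroup F] [NormedSpace ℝ F]
    (T : Ed d →L[ℝ] F) (u : Ed d) :
    T u = ∑ k, u k • T (EuclideanSpace.single k 1) := by
  conv_lhs => rw [← sum_coord_single u]
  rw [map_sum]
  simp

lemma opnorm_bilin_le (B : Ed d →L[ℝ] (Ed d →L[ℝ] ℝ)) (c : ℝ) (hc : 0 ≤ c)
    (hB : ∀ k m : Fin d, |B (EuclideanSpace.single k 1) (EuclideanSpace.single m 1)| ≤ c) :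
    ‖B‖ ≤ (d * d) * c := by
  apply ContinuousLinearMap.opNorm_le_bound _ (by positivity)
  intro u
  apply ContinuousLinearMap.opNorm_le_bound _ (by positivity)
  intro v
  have hBu : B u = ∑ k, u k • B (EuclideanSpace.single k 1) := clm_eq_sum B u
  have : (B u) v = ∑ k, ∑ m, u k * v m *
      B (EuclideanSpace.single k 1) (EuclideanSpace.single m 1) := by
    rw [hBu]
    rw [ContinuousLinearMap.sum_apply]
    refine Finset.sum_congr rfl fun k _ => ?_
    rw [ContinuousLinearMap.smul_apply]
    rw [clm_eq_sum (B (EuclideanSpace.single k 1)) v]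
    rw [Finset.smul_sum]
    refine Finset.sum_congr rfl fun m _ => ?_
    simp [smul_eq_mul]; ring
  rw [Real.norm_eq_abs, this]
  calc |∑ k, ∑ m, u k * v m * B (EuclideanSpace.single k 1) (EuclideanSpace.single m 1)|
      ≤ ∑ k, ∑ m : Fin d, |u k * v m * B (EuclideanSpace.single k 1) (EuclideanSpace.single m 1)| := by
        refine (Finset.abs_sum_le_sum_abs _ _).trans ?_
        exact Finset.sum_le_sum fun k _ => Finset.abs_sum_le_sum_abs _ _
    _ ≤ ∑ _k : Fin d, ∑ _m : Fin d, ‖u‖ * ‖v‖ * c := by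
        refine Finset.sum_le_sum fun k _ => Finset.sum_le_sum fun m _ => ?_
        rw [abs_mul, abs_mul]
        have h1 := abs_coord_le u k
        have h2 := abs_coord_le v m
        have h3 := hB k m
        have h4 : |u k| * |v m| ≤ ‖u‖ * ‖v‖ :=
          mul_le_mul h1 h2 (abs_nonneg _) (norm_nonneg _)
        calc |u k| * |v m| * |(B (EuclideanSpace.single k 1)) (EuclideanSpace.single m 1)|
            ≤ (‖u‖ * ‖v‖) * c :=
          mul_le_mul h4 h3 (abs_nonneg _) (by positivity)
          _ = ‖u‖ * ‖v‖ * c := by ring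
    _ = (d * d) * c * ‖u‖ * ‖v‖ := by
        simp only [Finset.sum_const, Finset.card_univ, Fintype.card_fin, nsmul_eq_mul]
        ring

lemma contDiff_pd (k : Fin d) {f : Ed d → ℝ} {n : ℕ} (hf : ContDiff ℝ ((n+1 : ℕ) : ℕ∞) f) :
    ContDiff ℝ (n : ℕ∞) (pd k f) := by
  have h1 : ContDiff ℝ (n : ℕ∞) (fderiv ℝ f) :=
    hf.fderiv_right (by exact_mod_cast le_refl ((n:ℕ∞)+1))
  exact h1.clm_apply contDiff_const

lemma contDiff_pd_iter (k : Fin d) {f : Ed d → ℝ} {n a : ℕ}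
    (hf : ContDiff ℝ ((n + a : ℕ) : ℕ∞) f) : ContDiff ℝ (n : ℕ∞) ((pd k)^[a] f) := by
  induction a generalizing n f with
  | zero => simpa using hf
  | succ a ih =>
    rw [Function.iterate_succ_apply']
    apply contDiff_pd
    exact ih (by exact_mod_cast (by push_cast; ring_nf : ((n + 1 + a : ℕ) : ℕ∞) = ((n + (a+1) : ℕ) : ℕ∞)) ▸ hf)

lemma contDiff_foldr (l : List (Fin d)) (β : Fin d → ℕ) {f : Ed d → ℝ} {n : ℕ}
    (hf : ContDiff ℝ ((n + (l.map β).sum : ℕ) : ℕ∞) f) :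
    ContDiff ℝ (n : ℕ∞) (l.foldr (fun k g => (pd k)^[β k] g) f) := by
  induction l generalizing n with
  | nil => simpa using hf
  | cons i t ih =>
    simp only [List.foldr_cons]
    apply contDiff_pd_iter
    apply ih
    have : (n + β i) + (t.map β).sum = n + ((i :: t).map β).sum := by simp; ring
    exact this ▸ hf

lemma continuous_Dmix {α : Fin d → ℕ} {f : Ed d → ℝ} (hα : deg α ≤ 2)
    (hf : ContDiff ℝ 2 f) : Continuous (Dmix α f) := by
  have hsum : ((List.finRange d).map α).sum = deg α := by
    rw [deg, Fin.sum_univ_def]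
  have h : ContDiff ℝ ((0 + ((List.finRange d).map α).sum : ℕ) : ℕ∞) f := by
    apply hf.of_le
    rw [hsum]
    have h2 : (0 + deg α : ℕ) ≤ 2 := by omega
    exact_mod_cast Nat.cast_le.mpr h2
  exact (contDiff_foldr _ _ h).continuous

lemma foldr_eq_id (l : List (Fin d)) (β : Fin d → ℕ) (f : Ed d → ℝ)
    (h : ∀ i ∈ l, β i = 0) :
    l.foldr (fun k g => (pd k)^[β k] g) f = f := by
  induction l with
  | nil => rfl
  | cons i t ih =>
    simp only [List.foldr_cons]
    rw [ih (fun j hj => h j (List.mem_cons_of_mem _ hj)), h i (List.mem_cons_self)]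
    rfl

lemma foldr_eq_single (l : List (Fin d)) (β : Fin d → ℕ) (f : Ed d → ℝ) (k : Fin d) (a : ℕ)
    (hl : l.Nodup) (hk : k ∈ l) (h : ∀ i ∈ l, β i = if i = k then a else 0) :
    l.foldr (fun i g => (pd i)^[β i] g) f = (pd k)^[a] f := by
  induction l with
  | nil => simp at hk
  | cons i t ih =>
    simp only [List.foldr_cons]
    rcases List.nodup_cons.mp hl with ⟨hit, hnd⟩
    by_cases hik : i = k
    · subst hik
      rw [foldr_eq_id t β f (fun j hj => by
        rw [h j (List.mem_cons_of_mem _ hj), if_neg]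
        rintro rfl; exact hit hj)]
      rw [h i (List.mem_cons_self), if_pos rfl]
    · rw [h i (List.mem_cons_self), if_neg hik]
      have hkt : k ∈ t := by
        rcases List.mem_cons.mp hk with h1 | h1
        · exact absurd h1.symm hik
        · exact h1
      rw [ih hnd hkt (fun j hj => h j (List.mem_cons_of_mem _ hj))]
      rfl

lemma foldr_eq_pair (l : List (Fin d)) (β : Fin d → ℕ) (f : Ed d → ℝ) (k m : Fin d)
    (hkm : k ≠ m) (hl : l.Nodup) (hk : k ∈ l) (hm : m ∈ l)
    (h : ∀ i ∈ l, β i = (if i = k then 1 else 0) + (if i = m then 1 else 0)) :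
    l.foldr (fun i g => (pd i)^[β i] g) f = pd k (pd m f) ∨
    l.foldr (fun i g => (pd i)^[β i] g) f = pd m (pd k f) := by
  induction l with
  | nil => simp at hk
  | cons i t ih =>
    simp only [List.foldr_cons]
    rcases List.nodup_cons.mp hl with ⟨hit, hnd⟩
    by_cases hik : i = k
    · subst hik
      left
      have hmt : m ∈ t := by
        rcases List.mem_cons.mp hm with h1 | h1
        · exact absurd h1.symm hkm
        · exact h1
      rw [foldr_eq_single t β f m 1 hnd hmt (fun j hj => by
        rw [h j (List.mem_cons_of_mem _ hj)]
        have : j ≠ i := by rintro rfl; exact hit hj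
        rw [if_neg this]; simp)]
      rw [h i (List.mem_cons_self), if_pos rfl, if_neg hkm]
      rfl
    · by_cases him : i = m
      · subst him
        right
        have hkt : k ∈ t := by
          rcases List.mem_cons.mp hk with h1 | h1
          · exact absurd h1 (fun hh => hik hh.symm)
          · exact h1
        rw [foldr_eq_single t β f k 1 hnd hkt (fun j hj => by
          rw [h j (List.mem_cons_of_mem _ hj)]
          have : j ≠ i := by rintro rfl; exact hit hj
          rw [if_neg this]; simp [add_comm])]
        rw [h i (List.mem_cons_self), if_neg (Ne.symm hkm), if_pos rfl]
        rfl
      · rw [h i (List.mem_cons_self), if_neg hik, if_neg him]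
        have hkt : k ∈ t := by
          rcases List.mem_cons.mp hk with h1 | h1
          · exact absurd h1 (fun hh => hik hh.symm)
          · exact h1
        have hmt : m ∈ t := by
          rcases List.mem_cons.mp hm with h1 | h1
          · exact absurd h1 (fun hh => him hh.symm)
          · exact h1
        exact ih hnd hkt hmt (fun j hj => h j (List.mem_cons_of_mem _ hj))

lemma pd_pd_eq {f : Ed d → ℝ} (hf : ContDiff ℝ 2 f) (w : Ed d) (k m : Fin d) :
    pd m (pd k f) w
      = fderiv ℝ (fderiv ℝ f) w (EuclideanSpace.single m 1) (EuclideanSpace.single k 1) := by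
  have hdf : DifferentiableAt ℝ (fderiv ℝ f) w :=
    ((hf.fderiv_right (m := 1) (by norm_num)).differentiable (by norm_num)) w
  have h1 : HasFDerivAt (fun x => fderiv ℝ f x (EuclideanSpace.single k (1:ℝ)))
      ((ContinuousLinearMap.apply ℝ ℝ (EuclideanSpace.single k (1:ℝ))).comp
        (fderiv ℝ (fderiv ℝ f) w)) w :=
    (ContinuousLinearMap.apply ℝ ℝ (EuclideanSpace.single k (1:ℝ))).hasFDerivAt.comp w
      hdf.hasFDerivAt
  show fderiv ℝ (fun x => fderiv ℝ f x (EuclideanSpace.single k 1)) w (EuclideanSpace.single m 1) = _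
  rw [h1.fderiv]
  rfl

lemma snd_symm {f : Ed d → ℝ} (hf : ContDiff ℝ 2 f) (w : Ed d) (u v : Ed d) :
    fderiv ℝ (fderiv ℝ f) w u v = fderiv ℝ (fderiv ℝ f) w v u := by
  have hdiff : ∀ y, HasFDerivAt f (fderiv ℝ f y) y := fun y =>
    ((hf.differentiable (by norm_num)) y).hasFDerivAt
  have hdf : HasFDerivAt (fderiv ℝ f) (fderiv ℝ (fderiv ℝ f) w) w :=
    (((hf.fderiv_right (m := 1) (by norm_num)).differentiable (by norm_num)) w).hasFDerivAt
  exact second_derivative_symmetric hdiff hdf u v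

lemma convex_cube (l : ℝ) : Convex ℝ (cube d l) := by
  intro p hp q hq a b ha hb hab
  intro k
  have := (convex_Icc (0:ℝ) l) (hp k) (hq k) ha hb hab
  simpa using this

lemma isCompact_cube (l : ℝ) : IsCompact (cube d l) := by
  have H : cube d l =
      (PiLp.continuousLinearEquiv 2 ℝ (fun _ : Fin d => ℝ)).toHomeomorph ⁻¹'
        (Set.univ.pi fun _ : Fin d => Set.Icc (0:ℝ) l) := by
    ext p
    simp only [Set.mem_preimage, Set.mem_univ_pi]
    constructor
    · intro hp k
      exact hp k
    · intro hp k
      exact hp k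
  rw [H]
  exact (Homeomorph.isCompact_preimage _).mpr (isCompact_univ_pi fun _ => isCompact_Icc)

lemma bddAbove_Cset {f : Ed d → ℝ} (hf : ContDiff ℝ 2 f) (l : ℝ) :
    BddAbove {y : ℝ | ∃ α : Fin d → ℕ, deg α ≤ 2 ∧ ∃ x ∈ cube d l, y = |Dmix α f x|} := by
  classical
  set A : Finset (Fin d → ℕ) :=
    ((Finset.univ : Finset (Fin d → Fin 3)).image (fun g k => (g k : ℕ))).filter
      (fun α => deg α ≤ 2) with hA
  have hsub : {y : ℝ | ∃ α : Fin d → ℕ, deg α ≤ 2 ∧ ∃ x ∈ cube d l, y = |Dmix α f x|}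
      ⊆ ⋃ α ∈ A, (fun x => |Dmix α f x|) '' cube d l := by
    rintro y ⟨α, hα, x, hx, rfl⟩
    have hαk : ∀ k, α k < 3 := by
      intro k
      have : α k ≤ deg α := Finset.single_le_sum (f := α) (fun i _ => Nat.zero_le _) (Finset.mem_univ k)
      omega
    have hαA : α ∈ A := by
      rw [hA, Finset.mem_filter]
      refine ⟨Finset.mem_image.mpr ⟨fun k => ⟨α k, hαk k⟩, Finset.mem_univ _, rfl⟩, hα⟩
    exact Set.mem_biUnion hαA ⟨x, hx, rfl⟩
  refine BddAbove.mono hsub ?_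
  apply (Set.Finite.bddAbove_biUnion A.finite_toSet).mpr
  intro α hα
  have hα2 : deg α ≤ 2 := (Finset.mem_filter.mp hα).2
  exact ((isCompact_cube l).image ((continuous_Dmix hα2 hf).abs)).bddAbove

lemma le_Cnorm {f : Ed d → ℝ} (hf : ContDiff ℝ 2 f) (l : ℝ) (α : Fin d → ℕ)
    (hα : deg α ≤ 2) {x : Ed d} (hx : x ∈ cube d l) :
    |Dmix α f x| ≤ Cnorm 2 f (cube d l) :=
  le_csSup (bddAbove_Cset hf l) ⟨α, hα, x, hx, rfl⟩

lemma taylor_bound {f : Ed d → ℝ} (hf : ContDiff ℝ 2 f) {s : Set (Ed d)} (hs : Convex ℝ s)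
    {x y : Ed d} (hx : x ∈ s) (hy : y ∈ s) {M : ℝ} (hM : 0 ≤ M)
    (hbound : ∀ z ∈ s, ‖fderiv ℝ (fderiv ℝ f) z‖ ≤ M) :
    |f y - f x - fderiv ℝ f x (y - x)| ≤ M * ‖y - x‖ ^ 2 := by
  have hg : Differentiable ℝ (fderiv ℝ f) :=
    (hf.fderiv_right (m := 1) (by norm_num)).differentiable (by norm_num)
  have hfd : Differentiable ℝ f := hf.differentiable (by norm_num)
  have step1 : ∀ z ∈ s, ‖fderiv ℝ f z - fderiv ℝ f x‖ ≤ M * ‖z - x‖ := by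
    intro z hz
    exact hs.norm_image_sub_le_of_norm_fderiv_le (fun w _ => hg w)
      (fun w hw => by rw [(hg w).hasFDerivAt.fderiv] at *; exact hbound w hw) hx hz
  set A := fderiv ℝ f x with hAdef
  set φ : Ed d → ℝ := fun z => f z - A z with hφ
  have hφd : ∀ z, DifferentiableAt ℝ φ z := fun z => (hfd z).sub (A.differentiableAt)
  have hφderiv : ∀ z, fderiv ℝ φ z = fderiv ℝ f z - A := by
    intro z
    rw [hφ]
    rw [fderiv_fun_sub (hfd z) A.differentiableAt, A.fderiv]
  have hseg : segment ℝ x y ⊆ s := hs.segment_subset hx hy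
  have hsegnorm : ∀ z ∈ segment ℝ x y, ‖z - x‖ ≤ ‖y - x‖ := by
    rintro z ⟨a, b, ha, hb, hab, rfl⟩
    have ha' : a = 1 - b := by linarith
    have : a • x + b • y - x = b • (y - x) := by
      rw [ha']; module
    rw [this, norm_smul]
    simp only [Real.norm_eq_abs, abs_of_nonneg hb]
    nlinarith [norm_nonneg (y - x)]
  have step2 : ‖φ y - φ x‖ ≤ (M * ‖y - x‖) * ‖y - x‖ := by
    apply (convex_segment x y).norm_image_sub_le_of_norm_fderiv_le
      (fun w _ => hφd w) ?_ (left_mem_segment ℝ x y) (right_mem_segment ℝ x y)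
    intro w hw
    rw [hφderiv w]
    calc ‖fderiv ℝ f w - A‖ ≤ M * ‖w - x‖ := step1 w (hseg hw)
      _ ≤ M * ‖y - x‖ := by
          have := hsegnorm w hw
          nlinarith
  have hφyx : φ y - φ x = f y - f x - A (y - x) := by
    rw [hφ]
    simp only
    rw [map_sub]
    ring
  rw [hφyx] at step2
  rw [← Real.norm_eq_abs]
  calc ‖f y - f x - A (y - x)‖ ≤ (M * ‖y - x‖) * ‖y - x‖ := step2
    _ = M * ‖y - x‖ ^ 2 := by ring

lemma mpow_single (u : Ed d) (k : Fin d) :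
    mpow u (fun i => if i = k then 1 else 0) = u k := by
  classical
  rw [mpow]
  have : ∀ i ∈ Finset.univ, u i ^ (if i = k then 1 else 0) = if i = k then u i else 1 := by
    intro i _
    by_cases hik : i = k <;> simp [hik]
  rw [Finset.prod_congr rfl this, Finset.prod_ite_eq' Finset.univ k (fun i => u i),
    if_pos (Finset.mem_univ k)]

lemma deg_single (k : Fin d) : deg (fun i => if i = k then 1 else 0) = 1 := by
  classical
  rw [deg]
  rw [Finset.sum_ite_eq' Finset.univ k (fun _ => 1)]
  simp

end Aux

/-- Function approximation: second-order accuracy of the SPH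
function approximation under the partition-of-unity type conditions. -/
theorem stmt_6
    (d : ℕ) (hd : d = 1 ∨ d = 2 ∨ d = 3) (σ : ℝ) (hσ : 0 < σ)
    (P : ℝ → ℝ) (hP : ContDiff ℝ 1 P)
    (hPnn : ∀ R : ℝ, 0 ≤ R → 0 ≤ P R)
    (hPsupp : ∀ R : ℝ, 1 ≤ R → P R = 0)
    (C₀ : ℝ) (hC₀ : 0 < C₀) :
    ∃ C > 0, ∀ (l : ℝ), 0 < l → ∀ (h : ℝ), 0 < h → h ≤ 1 →
      ∀ (xi : Ed d), xi ∈ cube d l →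
      ∀ (n : ℕ) (x : Fin n → Ed d) (v : Fin n → ℝ),
        (∀ j, x j ∈ cube d l) →
        (∀ j, 0 ≤ v j) →
        |∑ j, v j * Wval d σ h P (xi - x j) - 1| ≤ C₀ * h ^ 2 →
        (∀ β : Fin d → ℕ, deg β = 1 →
          |∑ j, v j * mpow (x j - xi) β * Wval d σ h P (xi - x j)| ≤ C₀ * h ^ 2) →
        ∀ f : Ed d → ℝ, ContDiff ℝ 2 f →
          |∑ j, v j * f (x j) * Wval d σ h P (xi - x j) - f xi|
            ≤ C * h ^ 2 * Cnorm 2 f (cube d l) := by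
  classical
  refine ⟨C₀ + d * C₀ + d * d * (1 + C₀), by positivity, ?_⟩
  intro l hl h hh hh1 xi hxi n x v hxc hv hunit hmom f hf
  set N := Cnorm 2 f (cube d l) with hN
  set W : Fin n → ℝ := fun j => Wval d σ h P (xi - x j) with hWdef
  -- nonnegativity of the kernel values
  have hW0 : ∀ j, 0 ≤ W j := by
    intro j
    apply mul_nonneg (div_nonneg hσ.le (pow_nonneg hh.le d))
    exact hPnn _ (div_nonneg (norm_nonneg _) hh.le)
  -- support bound
  have hWsupp : ∀ j, ‖x j - xi‖ ^ 2 * W j ≤ h ^ 2 * W j := by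
    intro j
    by_cases hlt : ‖xi - x j‖ < h
    · have hrev : ‖x j - xi‖ = ‖xi - x j‖ := norm_sub_rev _ _
      apply mul_le_mul_of_nonneg_right _ (hW0 j)
      rw [hrev]
      nlinarith [norm_nonneg (xi - x j)]
    · have : W j = 0 := by
        rw [hWdef]
        simp only
        rw [Wval, hPsupp _ ((le_div_iff₀ hh).mpr (by simpa using not_lt.mp hlt)), mul_zero]
      rw [this, mul_zero, mul_zero]
  -- C² norm lower bounds
  have hDmix0 : Dmix (fun _ : Fin d => 0) f = f :=
    foldr_eq_id _ _ _ (fun i _ => rfl)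
  have hfxi : |f xi| ≤ N := by
    have := le_Cnorm hf l (fun _ => 0) (by simp [deg]) hxi
    rwa [hDmix0] at this
  have hN0 : (0:ℝ) ≤ N := (abs_nonneg _).trans hfxi
  have hpdN : ∀ k : Fin d, |pd k f xi| ≤ N := by
    intro k
    have hDk : Dmix (fun i => if i = k then 1 else 0) f = pd k f := by
      rw [Dmix, foldr_eq_single _ _ _ k 1 (List.nodup_finRange d) (List.mem_finRange k)
        (fun i _ => rfl)]
      simp
    have := le_Cnorm hf l (fun i => if i = k then 1 else 0) (by rw [deg_single]; omega) hxi
    rwa [hDk] at this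
  -- second derivative entries bounded by N on the cube
  have hentries : ∀ w ∈ cube d l, ∀ k m : Fin d,
      |fderiv ℝ (fderiv ℝ f) w (EuclideanSpace.single k 1) (EuclideanSpace.single m 1)| ≤ N := by
    intro w hw k m
    have hval : fderiv ℝ (fderiv ℝ f) w (EuclideanSpace.single k 1) (EuclideanSpace.single m 1)
        = pd k (pd m f) w := (pd_pd_eq hf w m k).symm
    set α : Fin d → ℕ := fun i => (if i = k then 1 else 0) + (if i = m then 1 else 0) with hα
    have hdegα : deg α ≤ 2 := by
      rw [deg, hα]
      rw [Finset.sum_add_distrib]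
      have h1 : (∑ i, if i = k then 1 else 0) = 1 := by
        rw [Finset.sum_ite_eq' Finset.univ k (fun _ => 1)]; simp
      have h2 : (∑ i, if i = m then 1 else 0) = 1 := by
        rw [Finset.sum_ite_eq' Finset.univ m (fun _ => 1)]; simp
      omega
    by_cases hkm : k = m
    · subst hkm
      have hα2 : ∀ i ∈ List.finRange d, α i = if i = k then 2 else 0 := by
        intro i _
        by_cases hik : i = k <;> simp [hα, hik]
      have hDα : Dmix α f = pd k (pd k f) := by
        rw [Dmix, foldr_eq_single _ _ _ k 2 (List.nodup_finRange d) (List.mem_finRange k) hα2]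
        rfl
      have := le_Cnorm hf l α hdegα hw
      rw [hDα] at this
      rw [hval]
      exact this
    · rcases foldr_eq_pair (List.finRange d) α f k m hkm (List.nodup_finRange d)
        (List.mem_finRange k) (List.mem_finRange m) (fun i _ => rfl) with hcase | hcase
      · have := le_Cnorm hf l α hdegα hw
        rw [show (List.finRange d).foldr (fun i g => (pd i)^[α i] g) f = Dmix α f from rfl]
          at hcase
        rw [hcase] at this
        rw [hval]
        exact this
      · have := le_Cnorm hf l α hdegα hw
        rw [show (List.finRange d).foldr (fun i g => (pd i)^[α i] g) f = Dmix α f from rfl]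
          at hcase
        rw [hcase] at this
        have hsym : pd m (pd k f) w = pd k (pd m f) w := by
          rw [pd_pd_eq hf w k m, pd_pd_eq hf w m k]
          exact snd_symm hf w _ _
        rw [hsym] at this
        rw [hval]
        exact this
  -- operator norm bound for the second derivative on the cube
  have hopn : ∀ w ∈ cube d l, ‖fderiv ℝ (fderiv ℝ f) w‖ ≤ (d * d) * N := by
    intro w hw
    exact opnorm_bilin_le _ N hN0 (hentries w hw)
  -- Taylor remainder
  set R : Fin n → ℝ := fun j => f (x j) - f xi - fderiv ℝ f xi (x j - xi) with hRdef
  have hR : ∀ j, |R j| ≤ ((d:ℝ) * d * N) * ‖x j - xi‖ ^ 2 := by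
    intro j
    exact taylor_bound hf (convex_cube l) hxi (hxc j) (by positivity) hopn
  -- gradient decomposition
  have hgrad : ∀ j, fderiv ℝ f xi (x j - xi) = ∑ k, (x j - xi) k * pd k f xi := by
    intro j
    rw [clm_eq_sum (fderiv ℝ f xi) (x j - xi)]
    exact Finset.sum_congr rfl fun k _ => by rw [smul_eq_mul]; rfl
  -- moment bounds in coordinates
  have hTk : ∀ k : Fin d, |∑ j, v j * (x j - xi) k * W j| ≤ C₀ * h ^ 2 := by
    intro k
    have := hmom (fun i => if i = k then 1 else 0) (deg_single k)
    have hrw : ∀ j, v j * mpow (x j - xi) (fun i => if i = k then 1 else 0)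
        * Wval d σ h P (xi - x j) = v j * (x j - xi) k * W j := by
      intro j
      rw [mpow_single]
    rw [Finset.sum_congr rfl (fun j _ => hrw j)] at this
    exact this
  -- main identity
  have hid : ∑ j, v j * f (x j) * W j
      = f xi * (∑ j, v j * W j)
        + (∑ k, pd k f xi * (∑ j, v j * (x j - xi) k * W j))
        + ∑ j, v j * R j * W j := by
    have hterm : ∀ j, v j * f (x j) * W j
        = v j * f xi * W j + (∑ k, pd k f xi * (v j * (x j - xi) k * W j))
          + v j * R j * W j := by
      intro j
      have hfj : f (x j) = f xi + (∑ k, (x j - xi) k * pd k f xi) + R j := by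
        rw [hRdef]
        simp only
        rw [hgrad j]
        ring
      calc v j * f (x j) * W j
          = v j * f xi * W j + v j * (∑ k, (x j - xi) k * pd k f xi) * W j
            + v j * R j * W j := by rw [hfj]; ring
        _ = v j * f xi * W j + (∑ k, pd k f xi * (v j * (x j - xi) k * W j))
            + v j * R j * W j := by
            congr 1
            congr 1
            rw [Finset.mul_sum, Finset.sum_mul]
            exact Finset.sum_congr rfl fun k _ => by ring
    rw [Finset.sum_congr rfl (fun j _ => hterm j)]
    rw [Finset.sum_add_distrib, Finset.sum_add_distrib]
    congr 1
    congr 1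
    · rw [Finset.mul_sum]
      exact Finset.sum_congr rfl fun j _ => by ring
    · rw [Finset.sum_comm]
      exact Finset.sum_congr rfl fun k _ => by rw [Finset.mul_sum]
  -- bound for S
  have hS : ∑ j, v j * W j ≤ 1 + C₀ * h ^ 2 := by
    have := abs_le.mp hunit
    linarith [this.2]
  -- remainder sum bound
  have hb3 : |∑ j, v j * R j * W j| ≤ ((d:ℝ) * d * N) * h ^ 2 * (1 + C₀) := by
    calc |∑ j, v j * R j * W j| ≤ ∑ j, |v j * R j * W j| := Finset.abs_sum_le_sum_abs _ _
      _ ≤ ∑ j, ((d:ℝ) * d * N) * h ^ 2 * (v j * W j) := by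
          refine Finset.sum_le_sum fun j _ => ?_
          rw [abs_mul, abs_mul, abs_of_nonneg (hv j), abs_of_nonneg (hW0 j)]
          calc v j * |R j| * W j
              ≤ v j * (((d:ℝ) * d * N) * ‖x j - xi‖ ^ 2) * W j := by
                apply mul_le_mul_of_nonneg_right _ (hW0 j)
                exact mul_le_mul_of_nonneg_left (hR j) (hv j)
            _ = v j * ((d:ℝ) * d * N) * (‖x j - xi‖ ^ 2 * W j) := by ring
            _ ≤ v j * ((d:ℝ) * d * N) * (h ^ 2 * W j) := by
                apply mul_le_mul_of_nonneg_left (hWsupp j)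
                have := hv j
                positivity
            _ = ((d:ℝ) * d * N) * h ^ 2 * (v j * W j) := by ring
      _ = ((d:ℝ) * d * N) * h ^ 2 * ∑ j, v j * W j := by rw [Finset.mul_sum]
      _ ≤ ((d:ℝ) * d * N) * h ^ 2 * (1 + C₀) := by
          apply mul_le_mul_of_nonneg_left _ (by positivity)
          have hh2 : h ^ 2 ≤ 1 := by nlinarith
          calc ∑ j, v j * W j ≤ 1 + C₀ * h ^ 2 := hS
            _ ≤ 1 + C₀ := by nlinarith
  -- linear term bound
  have hb2 : |∑ k, pd k f xi * (∑ j, v j * (x j - xi) k * W j)| ≤ (d:ℝ) * (N * (C₀ * h ^ 2)) := by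
    calc |∑ k, pd k f xi * (∑ j, v j * (x j - xi) k * W j)|
        ≤ ∑ k, |pd k f xi * (∑ j, v j * (x j - xi) k * W j)| := Finset.abs_sum_le_sum_abs _ _
      _ ≤ ∑ _k : Fin d, N * (C₀ * h ^ 2) := by
          refine Finset.sum_le_sum fun k _ => ?_
          rw [abs_mul]
          exact mul_le_mul (hpdN k) (hTk k) (abs_nonneg _) hN0
      _ = (d:ℝ) * (N * (C₀ * h ^ 2)) := by
          simp [Finset.sum_const, Finset.card_univ, nsmul_eq_mul]
  -- constant term bound
  have hb1 : |f xi * ((∑ j, v j * W j) - 1)| ≤ N * (C₀ * h ^ 2) := by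
    rw [abs_mul]
    exact mul_le_mul hfxi hunit (abs_nonneg _) hN0
  -- conclude
  have hfinal : |∑ j, v j * f (x j) * W j - f xi|
      ≤ N * (C₀ * h ^ 2) + (d:ℝ) * (N * (C₀ * h ^ 2)) + ((d:ℝ) * d * N) * h ^ 2 * (1 + C₀) := by
    have hsplit : ∑ j, v j * f (x j) * W j - f xi
        = f xi * ((∑ j, v j * W j) - 1)
          + (∑ k, pd k f xi * (∑ j, v j * (x j - xi) k * W j))
          + ∑ j, v j * R j * W j := by
      rw [hid]; ring
    rw [hsplit]
    calc |f xi * ((∑ j, v j * W j) - 1)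
          + (∑ k, pd k f xi * (∑ j, v j * (x j - xi) k * W j))
          + ∑ j, v j * R j * W j|
        ≤ |f xi * ((∑ j, v j * W j) - 1)
            + (∑ k, pd k f xi * (∑ j, v j * (x j - xi) k * W j))|
          + |∑ j, v j * R j * W j| := abs_add_le _ _
      _ ≤ (|f xi * ((∑ j, v j * W j) - 1)|
            + |∑ k, pd k f xi * (∑ j, v j * (x j - xi) k * W j)|)
          + |∑ j, v j * R j * W j| := by gcongr; exact abs_add_le _ _
      _ ≤ N * (C₀ * h ^ 2) + (d:ℝ) * (N * (C₀ * h ^ 2)) + ((d:ℝ) * d * N) * h ^ 2 * (1 + C₀) := by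
          gcongr
  calc |∑ j, v j * f (x j) * Wval d σ h P (xi - x j) - f xi|
      ≤ N * (C₀ * h ^ 2) + (d:ℝ) * (N * (C₀ * h ^ 2)) + ((d:ℝ) * d * N) * h ^ 2 * (1 + C₀) :=
        hfinal
    _ = (C₀ + d * C₀ + d * d * (1 + C₀)) * h ^ 2 * N := by ring
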